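/- arXiv:1503.07414 — 2 statements merged into one kernel-verified Lean document; each statement's English description precedes it below -/
import Mathlib

section
/- In a metric graph G with basepoint b, any local maximum v of the geodesic distance function f_b(x) = d_G(b, x) that is not a degree-1 graph node admits at least two shortest paths from b to v that are disjoint within some small neighborhood of v (one through each local branch at v). -/
open Set Metric Filter Topology

/-- A unit-speed parametrized path is continuous on its interval of definition. -/
private lemma geo_continuousOn {G : Type*} [MetricSpace G] (γ : ℝ → G) (a c : ℝ)
    (hiso : ∀ s ∈ Icc a c, ∀ t ∈ Icc a c, dist (γ s) (γ t) = |s - t|) :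
    ContinuousOn γ (Icc a c) := by
  refine LipschitzOnWith.continuousOn (K := 1) (LipschitzOnWith.of_dist_le_mul ?_)
  intro x hx y hy
  rw [hiso x hx y hy, Real.dist_eq]
  simp

/-- A preconnected set inside a separated set containing a point of `w` lies in `w`. -/
private lemma subset_w_side {G : Type*} [TopologicalSpace G] {u w S B : Set G}
    (hu : IsOpen u) (hw : IsOpen w) (hcov : B ⊆ u ∪ w)
    (hdisj : B ∩ (u ∩ w) = ∅) (hS : IsPreconnected S) (hSB : S ⊆ B)
    {x : G} (hxS : x ∈ S) (hxw : x ∈ w) : S ⊆ w := by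
  by_contra h
  obtain ⟨y, hyS, hyw⟩ := not_subset.mp h
  have hyu : y ∈ u := (hcov (hSB hyS)).resolve_right hyw
  obtain ⟨z, hzS, hzu, hzw⟩ :=
    hS u w hu hw (hSB.trans hcov) ⟨y, hyS, hyu⟩ ⟨x, hxS, hxw⟩
  have : z ∈ B ∩ (u ∩ w) := ⟨hSB hzS, hzu, hzw⟩
  rw [hdisj] at this
  exact this

/-- Key construction: given a separation `(u, w)` of the punctured ball around a
local maximum `v` of `dist b ·`, there is a geodesic from `b` to `v` whose tail
lies in the `w`-side of the separation. -/
private lemma geodesic_into_side {G : Type*} [MetricSpace G] [CompactSpace G]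
    (hgeo : ∀ x y : G, ∃ γ : ℝ → G, γ 0 = x ∧ γ (dist x y) = y ∧
      ∀ s ∈ Icc 0 (dist x y), ∀ t ∈ Icc 0 (dist x y), dist (γ s) (γ t) = |s - t|)
    (b v : G) {εm ε1 : ℝ} (hε1 : 0 < ε1) (hε1m : ε1 ≤ εm) (hε1D : ε1 ≤ dist b v)
    (hloc : ∀ x : G, dist x v < εm → dist b x ≤ dist b v)
    {u w : Set G} (hu : IsOpen u) (hw : IsOpen w)
    (hcov : ball v ε1 \ {v} ⊆ u ∪ w)
    (hdisj : (ball v ε1 \ {v}) ∩ (u ∩ w) = ∅)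
    (hwne : ((ball v ε1 \ {v}) ∩ w).Nonempty) :
    ∃ σ : ℝ → G, (σ 0 = b ∧ σ (dist b v) = v ∧
      ∀ s ∈ Icc 0 (dist b v), ∀ t ∈ Icc 0 (dist b v), dist (σ s) (σ t) = |s - t|) ∧
      ∀ t ∈ Ioo (dist b v - ε1) (dist b v), σ t ∈ w ∧ σ t ∉ u := by
  set D := dist b v with hDdef
  -- Step A: points of the w-side arbitrarily close to v.
  obtain ⟨x, hxB, hxw⟩ := hwne
  have hxv : x ≠ v := fun h => hxB.2 (by simp [h])
  have hxball : dist x v < ε1 := mem_ball.mp hxB.1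
  obtain ⟨τ, hτ0, hτr, hτiso⟩ := hgeo v x
  set r := dist v x with hrdef
  have hr0 : 0 < r := dist_pos.mpr (Ne.symm hxv)
  have hrε : r < ε1 := by rwa [hrdef, dist_comm]
  set d : ℕ → ℝ := fun n => r / (n + 1) with hddef
  have hd0 : ∀ n, 0 < d n := fun n => by positivity
  have hdr : ∀ n, d n ≤ r := fun n => by
    rw [hddef]
    rw [div_le_iff₀ (by positivity)]
    nlinarith [hr0, Nat.cast_nonneg (α := ℝ) n]
  -- distance of points on τ to v
  have hτdist : ∀ s ∈ Icc (0:ℝ) r, dist (τ s) v = s := by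
    intro s hs
    have := hτiso s hs 0 ⟨le_refl 0, hr0.le⟩
    rw [hτ0] at this
    rw [this]
    rw [abs_of_nonneg (by linarith [hs.1])]
    ring
  -- each τ s for s ∈ (0, r] is in the punctured ball
  have hτmem : ∀ s, 0 < s → s ≤ r → τ s ∈ ball v ε1 \ {v} := by
    intro s hs0 hsr
    have hd := hτdist s ⟨hs0.le, hsr⟩
    constructor
    · exact mem_ball.mpr (by rw [hd]; linarith)
    · simp only [mem_singleton_iff]
      intro h
      rw [h, dist_self] at hd
      linarith
  set xx : ℕ → G := fun n => τ (d n) with hxxdef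
  have hxxd : ∀ n, dist (xx n) v = d n := fun n => hτdist (d n) ⟨(hd0 n).le, hdr n⟩
  have hxxw : ∀ n, xx n ∈ w := by
    intro n
    have hScon : IsPreconnected (τ '' Icc (d n) r) := by
      refine isPreconnected_Icc.image τ ?_
      exact (geo_continuousOn τ 0 r (by rw [← hDdef] at *; exact hτiso)).mono
        (Icc_subset_Icc (hd0 n).le (le_refl r))
    have hSB : τ '' Icc (d n) r ⊆ ball v ε1 \ {v} := by
      rintro y ⟨s, hs, rfl⟩
      exact hτmem s (lt_of_lt_of_le (hd0 n) hs.1) hs.2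
    have hxS : x ∈ τ '' Icc (d n) r := ⟨r, ⟨hdr n, le_refl r⟩, hτr⟩
    exact subset_w_side hu hw hcov hdisj hScon hSB hxS hxw
      ⟨d n, ⟨le_refl _, hdr n⟩, rfl⟩
  have hxxB : ∀ n, xx n ∈ ball v ε1 \ {v} := fun n => hτmem (d n) (hd0 n) (hdr n)
  have hxxv : ∀ n, xx n ≠ v := fun n h => (hxxB n).2 (by simp [h])
  -- Step B: geodesics from b to xx n
  have Hσ : ∀ n, ∃ γ : ℝ → G, γ 0 = b ∧ γ (dist b (xx n)) = xx n ∧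
      ∀ s ∈ Icc 0 (dist b (xx n)), ∀ t ∈ Icc 0 (dist b (xx n)),
        dist (γ s) (γ t) = |s - t| := fun n => hgeo b (xx n)
  choose σ' hσ'0 hσ'L hσ'iso using Hσ
  set L : ℕ → ℝ := fun n => dist b (xx n) with hLdef
  have hL0 : ∀ n, 0 ≤ L n := fun n => dist_nonneg
  have hLle : ∀ n, L n ≤ D := by
    intro n
    refine hloc (xx n) ?_
    rw [hxxd n]
    calc d n ≤ r := hdr n
      _ < ε1 := hrε
      _ ≤ εm := hε1m
  have hLge : ∀ n, D - d n ≤ L n := by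
    intro n
    have := dist_triangle b (xx n) v
    rw [hxxd n] at this
    rw [hDdef]
    linarith [this]
  -- Step C: convergence facts
  have hdtend : Tendsto d atTop (𝓝 0) := by
    have h1 : Tendsto (fun n : ℕ => r * (1 / ((n : ℝ) + 1))) atTop (𝓝 (r * 0)) :=
      tendsto_one_div_add_atTop_nhds_zero_nat.const_mul r
    simpa [hddef, div_eq_mul_inv, mul_comm] using h1
  have hLtend : Tendsto L atTop (𝓝 D) := by
    refine tendsto_of_tendsto_of_tendsto_of_le_of_le'
      (g := fun n => D - d n) (h := fun _ => D) ?_ tendsto_const_nhds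
      (Eventually.of_forall hLge) (Eventually.of_forall hLle)
    simpa using tendsto_const_nhds.sub hdtend
  have hxxtend : Tendsto xx atTop (𝓝 v) := by
    rw [tendsto_iff_dist_tendsto_zero]
    simpa [hxxd] using hdtend
  -- Step D: ultrafilter limit
  set F : Ultrafilter ℕ := Ultrafilter.of atTop with hFdef
  have hF : (F : Filter ℕ) ≤ atTop := Ultrafilter.of_le _
  have hconv : ∀ t : ℝ, ∃ p : G, Tendsto (fun n => σ' n (min t (L n))) F (𝓝 p) := by
    intro t
    obtain ⟨p, -, hp⟩ := isCompact_univ.ultrafilter_le_nhds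
      (F.map fun n => σ' n (min t (L n))) (by simp)
    exact ⟨p, by rwa [Ultrafilter.coe_map] at hp⟩
  choose σ hσ using hconv
  have htmin : ∀ s ∈ Icc (0:ℝ) D, Tendsto (fun n => min s (L n)) atTop (𝓝 s) := by
    intro s hs
    have := (tendsto_const_nhds : Tendsto (fun _ : ℕ => s) atTop (𝓝 s)).min hLtend
    rwa [min_eq_left hs.2] at this
  -- Step F: σ is a geodesic from b to v
  have hσ0 : σ 0 = b := by
    have he : (fun n => σ' n (min 0 (L n))) = fun _ => b := by
      funext n; rw [min_eq_left (hL0 n), hσ'0 n]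
    refine tendsto_nhds_unique (hσ 0) ?_
    rw [he]; exact tendsto_const_nhds
  have hσD : σ D = v := by
    have he : (fun n => σ' n (min D (L n))) = xx := by
      funext n; rw [min_eq_right (hLle n)]; exact hσ'L n
    refine tendsto_nhds_unique (hσ D) ?_
    rw [he]; exact hxxtend.mono_left hF
  have hσiso : ∀ s ∈ Icc 0 D, ∀ t ∈ Icc 0 D, dist (σ s) (σ t) = |s - t| := by
    intro s hs t ht
    have h1 : Tendsto (fun n => dist (σ' n (min s (L n))) (σ' n (min t (L n)))) F
        (𝓝 (dist (σ s) (σ t))) := (hσ s).dist (hσ t)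
    have h2 : (fun n => dist (σ' n (min s (L n))) (σ' n (min t (L n)))) =
        fun n => |min s (L n) - min t (L n)| := by
      funext n
      exact hσ'iso n _ ⟨le_min hs.1 (hL0 n), min_le_right _ _⟩
        _ ⟨le_min ht.1 (hL0 n), min_le_right _ _⟩
    have h3 : Tendsto (fun n => |min s (L n) - min t (L n)|) atTop (𝓝 |s - t|) :=
      ((htmin s hs).sub (htmin t ht)).abs
    refine tendsto_nhds_unique h1 ?_
    rw [h2]; exact h3.mono_left hF
  -- points on σ' n beyond time 0 have distance to b equal to their time
  have hσ'db : ∀ n, ∀ s ∈ Icc (0:ℝ) (L n), dist b (σ' n s) = s := by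
    intro n s hs
    have := hσ'iso n 0 ⟨le_refl 0, hL0 n⟩ s hs
    rw [hσ'0 n] at this
    rw [this, abs_of_nonpos (by linarith [hs.1])]
    ring
  -- Step G: side membership of the tail
  refine ⟨σ, ⟨hσ0, hσD, hσiso⟩, ?_⟩
  intro t ht
  have ht0 : 0 ≤ t := le_trans (by linarith [hε1D]) ht.1.le
  have htD : t ≤ D := ht.2.le
  -- σ t is in the punctured ball
  have hσtB : σ t ∈ ball v ε1 \ {v} := by
    have hd : dist (σ t) v = D - t := by
      have := hσiso t ⟨ht0, htD⟩ D ⟨dist_nonneg, le_refl D⟩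
      rw [hσD] at this
      rw [this, abs_of_nonpos (by linarith [ht.2])]
      ring
    constructor
    · exact mem_ball.mpr (by rw [hd]; linarith [ht.1])
    · simp only [mem_singleton_iff]
      intro h
      rw [h, dist_self] at hd
      linarith [ht.2]
  -- eventually, σ' n (min t (L n)) is in the w-side of the punctured ball
  have hev : ∀ᶠ n in atTop, σ' n (min t (L n)) ∈ w ∧
      σ' n (min t (L n)) ∈ ball v ε1 \ {v} := by
    have hc : (0:ℝ) < min (D - t) (ε1 - (D - t)) :=
      lt_min (by linarith [ht.2]) (by linarith [ht.1])
    filter_upwards [hdtend.eventually (gt_mem_nhds hc)] with n hn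
    have hn1 : d n < D - t := lt_of_lt_of_le hn (min_le_left _ _)
    have hn2 : d n < ε1 - (D - t) := lt_of_lt_of_le hn (min_le_right _ _)
    have hLt : t < L n := by linarith [hLge n]
    have hmin : min t (L n) = t := min_eq_left hLt.le
    -- the segment σ' n '' [t, L n] lies in the punctured ball
    have hSB : σ' n '' Icc t (L n) ⊆ ball v ε1 \ {v} := by
      rintro y ⟨s, hs, rfl⟩
      have hsmem : s ∈ Icc (0:ℝ) (L n) := ⟨le_trans ht0 hs.1, hs.2⟩
      have hdxs : dist (σ' n s) (xx n) = L n - s := by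
        have := hσ'iso n s hsmem (L n) ⟨hL0 n, le_refl _⟩
        rw [hσ'L n] at this
        rw [this, abs_of_nonpos (by linarith [hs.2])]
        ring
      have hballmem : dist (σ' n s) v < ε1 := by
        calc dist (σ' n s) v ≤ dist (σ' n s) (xx n) + dist (xx n) v :=
              dist_triangle _ _ _
          _ = (L n - s) + d n := by rw [hdxs, hxxd n]
          _ ≤ (D - t) + d n := by
              have := hLle n
              have := hs.1
              linarith
          _ < ε1 := by linarith
      refine ⟨mem_ball.mpr hballmem, ?_⟩
      simp only [mem_singleton_iff]
      intro h
      have hdb : dist b (σ' n s) = s := hσ'db n s hsmem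
      rw [h] at hdb
      -- so s = D, but s ≤ L n ≤ D forces s = L n and xx n = v
      have hsD : s = D := by rw [hDdef, hdb]
      have hsL : s = L n := le_antisymm hs.2 (by linarith [hLle n])
      have : σ' n s = xx n := by rw [hsL]; exact hσ'L n
      rw [h] at this
      exact hxxv n this.symm
    -- the segment is preconnected and contains xx n ∈ w
    have hScon : IsPreconnected (σ' n '' Icc t (L n)) := by
      refine isPreconnected_Icc.image (σ' n) ?_
      exact (geo_continuousOn (σ' n) 0 (L n) (hσ'iso n)).mono
        (Icc_subset_Icc ht0 (le_refl _))
    have hxxS : xx n ∈ σ' n '' Icc t (L n) :=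
      ⟨L n, ⟨hLt.le, le_refl _⟩, hσ'L n⟩
    have hSw : σ' n '' Icc t (L n) ⊆ w :=
      subset_w_side hu hw hcov hdisj hScon hSB hxxS (hxxw n)
    have htS : σ' n t ∈ σ' n '' Icc t (L n) := ⟨t, ⟨le_refl _, hLt.le⟩, rfl⟩
    rw [hmin]
    exact ⟨hSw htS, hSB htS⟩
  -- σ t is not in u
  have hnotu : σ t ∉ u := by
    intro hσtu
    have h2 : ∀ᶠ n in (F : Filter ℕ), σ' n (min t (L n)) ∈ u :=
      (hσ t).eventually (hu.eventually_mem hσtu)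
    have h1 : ∀ᶠ n in (F : Filter ℕ), σ' n (min t (L n)) ∈ w ∧
        σ' n (min t (L n)) ∈ ball v ε1 \ {v} := hev.filter_mono hF
    obtain ⟨n, ⟨hnw, hnB⟩, hnu⟩ := (h1.and h2).exists
    have : σ' n (min t (L n)) ∈ (ball v ε1 \ {v}) ∩ (u ∩ w) := ⟨hnB, hnu, hnw⟩
    rw [hdisj] at this
    exact this
  exact ⟨(hcov hσtB).resolve_left hnotu, hnotu⟩

/-- In a metric graph `G` (a compact geodesic metric space) with basepoint
`b`, any local maximum `v ≠ b` of the geodesic distance function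
`f_b(x) = d_G(b, x)` that is not a degree-1 node — i.e. near which the
punctured neighborhoods are disconnected into at least two branches —
admits at least two shortest paths (unit-speed geodesics) from `b` to `v`
that are disjoint within a small punctured neighborhood of `v`. -/
theorem local_max_two_disjoint_shortest_paths
    {G : Type*} [MetricSpace G] [CompactSpace G]
    (hgeo : ∀ x y : G, ∃ γ : ℝ → G, γ 0 = x ∧ γ (dist x y) = y ∧
      ∀ s ∈ Icc 0 (dist x y), ∀ t ∈ Icc 0 (dist x y), dist (γ s) (γ t) = |s - t|)
    (b v : G) (hbv : b ≠ v)
    -- `v` is a local maximum of `f_b = d_G(b, ·)`: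
    (hmax : ∃ ε > 0, ∀ x : G, dist x v < ε → dist b x ≤ dist b v)
    -- `v` is not a degree-1 node: small punctured balls around `v` are
    -- disconnected (there are at least two local branches at `v`):
    (hbranch : ∃ ε0 > 0, ∀ ε, 0 < ε → ε < ε0 →
      ¬ IsPreconnected (ball v ε \ {v})) :
    ∃ γ1 γ2 : ℝ → G,
      (γ1 0 = b ∧ γ1 (dist b v) = v ∧
        ∀ s ∈ Icc 0 (dist b v), ∀ t ∈ Icc 0 (dist b v),
          dist (γ1 s) (γ1 t) = |s - t|) ∧
      (γ2 0 = b ∧ γ2 (dist b v) = v ∧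
        ∀ s ∈ Icc 0 (dist b v), ∀ t ∈ Icc 0 (dist b v),
          dist (γ2 s) (γ2 t) = |s - t|) ∧
      ∃ ε > 0, ∀ s ∈ Ioo (dist b v - ε) (dist b v),
        ∀ t ∈ Ioo (dist b v - ε) (dist b v), γ1 s ≠ γ2 t := by
  obtain ⟨εm, hεm, hloc⟩ := hmax
  obtain ⟨ε0, hε0, hdisc⟩ := hbranch
  have hD : 0 < dist b v := dist_pos.mpr hbv
  set ε1 := min εm (min ε0 (dist b v)) / 2 with hε1def
  have hm0 : 0 < min εm (min ε0 (dist b v)) := lt_min hεm (lt_min hε0 hD)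
  have hε1 : 0 < ε1 := by rw [hε1def]; linarith
  have hε1m : ε1 ≤ εm := by
    have := min_le_left εm (min ε0 (dist b v))
    rw [hε1def]; linarith
  have hε1ε0 : ε1 < ε0 := by
    have h1 := min_le_right εm (min ε0 (dist b v))
    have h2 := min_le_left ε0 (dist b v)
    rw [hε1def]; linarith
  have hε1D : ε1 ≤ dist b v := by
    have h1 := min_le_right εm (min ε0 (dist b v))
    have h2 := min_le_right ε0 (dist b v)
    rw [hε1def]; linarith
  have hnc := hdisc ε1 hε1 hε1ε0
  unfold IsPreconnected at hnc
  push_neg at hnc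
  obtain ⟨u, w, hu, hw, hcov, hune, hwne, hncne⟩ := hnc
  have hdisj : (ball v ε1 \ {v}) ∩ (u ∩ w) = ∅ := hncne
  have hdisj' : (ball v ε1 \ {v}) ∩ (w ∩ u) = ∅ := by rwa [inter_comm u w] at hdisj
  have hcov' : ball v ε1 \ {v} ⊆ w ∪ u := by rwa [union_comm] at hcov
  obtain ⟨σ1, hσ1geo, hσ1side⟩ :=
    geodesic_into_side hgeo b v hε1 hε1m hε1D hloc hw hu hcov' hdisj' hune
  obtain ⟨σ2, hσ2geo, hσ2side⟩ :=
    geodesic_into_side hgeo b v hε1 hε1m hε1D hloc hu hw hcov hdisj hwne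
  refine ⟨σ1, σ2, hσ1geo, hσ2geo, ε1, hε1, ?_⟩
  intro s hs t ht h
  have h1 := hσ1side s hs
  have h2 := hσ2side t ht
  rw [h] at h1
  exact h1.2 h2.1
end

section
/- Let P and Q be finite point sets in ℝ² and let P', Q' be the orthogonal (L∞-nearest-point) projections of P and Q onto the diagonal L = {(x,x)}. Then the bottleneck distance between the persistence diagrams P and Q (allowing matchings to the diagonal) equals the point-set bottleneck distance (perfect-matching bottleneck distance under L∞ norm) between P ∪ Q' and Q ∪ P': d_B(P, Q) = d̂_B(P ∪ Q', Q ∪ P'). -/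
open Finset

/-- `L∞` distance between two points of the plane. -/
noncomputable def linfDist (p q : ℝ × ℝ) : ℝ := max |p.1 - q.1| |p.2 - q.2|

/-- Nearest-point (`L∞`) projection of a point onto the diagonal
`L = {(x, x)}`. -/
noncomputable def diagProj (p : ℝ × ℝ) : ℝ × ℝ := ((p.1 + p.2) / 2, (p.1 + p.2) / 2)

/-- `L∞` distance of a point to the diagonal. -/
noncomputable def distToDiag (p : ℝ × ℝ) : ℝ := |p.2 - p.1| / 2

/-- A partial matching between two persistence diagrams given as indexed
families (`Fin k` and `Fin l`, so multiplicities are respected): a set of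
matched index pairs, each index used at most once on each side; unmatched
points are matched to the diagonal. -/
structure IndexedPartialMatching (k l : ℕ) where
  M : Finset (Fin k × Fin l)
  injL : ∀ a ∈ M, ∀ b ∈ M, a.1 = b.1 → a = b
  injR : ∀ a ∈ M, ∀ b ∈ M, a.2 = b.2 → a = b

/-- The cost of a partial matching between diagrams `p : Fin k → ℝ²` and
`q : Fin l → ℝ²`. -/
noncomputable def pmCost {k l : ℕ} (p : Fin k → ℝ × ℝ) (q : Fin l → ℝ × ℝ)
    (C : IndexedPartialMatching k l) : ℝ :=
  sSup ({r | ∃ ij ∈ C.M, r = linfDist (p ij.1) (q ij.2)} ∪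
        {r | ∃ i, (∀ j, (i, j) ∉ C.M) ∧ r = distToDiag (p i)} ∪
        {r | ∃ j, (∀ i, (i, j) ∉ C.M) ∧ r = distToDiag (q j)})

/-- Persistence-diagram bottleneck distance (matchings to the diagonal
allowed). -/
noncomputable def dB {k l : ℕ} (p : Fin k → ℝ × ℝ) (q : Fin l → ℝ × ℝ) : ℝ :=
  sInf {r | ∃ C : IndexedPartialMatching k l, r = pmCost p q C}

/-- Point-set (perfect-matching) bottleneck distance between two families of
points indexed by the same finite type. -/
noncomputable def dHatB {ι : Type*} [Fintype ι] (A B : ι → ℝ × ℝ) : ℝ :=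
  sInf {r | ∃ σ : Equiv.Perm ι, r = sSup {d | ∃ i, d = linfDist (A i) (B (σ i))}}

/-! ### Auxiliary lemmas -/

lemma linfDist_nonneg (a b : ℝ × ℝ) : 0 ≤ linfDist a b :=
  le_trans (abs_nonneg _) (le_max_left _ _)

lemma distToDiag_nonneg (a : ℝ × ℝ) : 0 ≤ distToDiag a := by
  unfold distToDiag; positivity

lemma linfDist_comm (a b : ℝ × ℝ) : linfDist a b = linfDist b a := by
  unfold linfDist; rw [abs_sub_comm, abs_sub_comm a.2]

lemma linfDist_diagProj_self (a : ℝ × ℝ) : linfDist a (diagProj a) = distToDiag a := by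
  unfold linfDist diagProj distToDiag
  have e1 : a.1 - (a.1 + a.2) / 2 = (a.1 - a.2) / 2 := by ring
  have e2 : a.2 - (a.1 + a.2) / 2 = (a.2 - a.1) / 2 := by ring
  simp only [e1, e2, abs_div, abs_two]
  rw [abs_sub_comm a.1, max_self]

lemma distToDiag_le_left (a b : ℝ × ℝ) : distToDiag a ≤ linfDist a (diagProj b) := by
  unfold distToDiag linfDist diagProj
  set m := (b.1 + b.2) / 2
  have h : |a.2 - a.1| ≤ |a.2 - m| + |a.1 - m| := by
    calc |a.2 - a.1| = |(a.2 - m) - (a.1 - m)| := by ring_nf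
    _ ≤ _ := abs_sub _ _
  have h1 : |a.1 - m| ≤ max |a.1 - m| |a.2 - m| := le_max_left _ _
  have h2 : |a.2 - m| ≤ max |a.1 - m| |a.2 - m| := le_max_right _ _
  simp only []
  linarith

lemma distToDiag_le_right (a b : ℝ × ℝ) : distToDiag b ≤ linfDist (diagProj a) b := by
  rw [linfDist_comm]; exact distToDiag_le_left b a

lemma linfDist_diagProj_le (a b : ℝ × ℝ) : linfDist (diagProj a) (diagProj b) ≤ linfDist a b := by
  unfold linfDist diagProj
  simp only [max_self]
  have h : |(a.1 + a.2)/2 - (b.1 + b.2)/2| ≤ (|a.1 - b.1| + |a.2 - b.2|)/2 := by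
    rw [abs_le]; constructor <;> cases abs_cases (a.1 - b.1) <;> cases abs_cases (a.2 - b.2) <;> linarith
  have h1 : |a.1 - b.1| ≤ max |a.1 - b.1| |a.2 - b.2| := le_max_left _ _
  have h2 : |a.2 - b.2| ≤ max |a.1 - b.1| |a.2 - b.2| := le_max_right _ _
  linarith

/-! ### From a partial matching to a permutation -/

/-- The involution on `Fin k ⊕ Fin l` induced by a partial matching:
matched indices are swapped across the two sides, unmatched indices stay. -/
noncomputable def matchFun {k l : ℕ} (C : IndexedPartialMatching k l) :
    Fin k ⊕ Fin l → Fin k ⊕ Fin l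
  | .inl i => if h : ∃ j, (i, j) ∈ C.M then .inr h.choose else .inl i
  | .inr j => if h : ∃ i, (i, j) ∈ C.M then .inl h.choose else .inr j

lemma matchFun_involutive {k l : ℕ} (C : IndexedPartialMatching k l) :
    Function.Involutive (matchFun C) := by
  intro x
  cases x with
  | inl i =>
    by_cases hi : ∃ j, (i, j) ∈ C.M
    · have hspec := hi.choose_spec
      have h2 : ∃ i', (i', hi.choose) ∈ C.M := ⟨i, hspec⟩
      simp only [matchFun, dif_pos hi, dif_pos h2]
      have := C.injR _ h2.choose_spec _ hspec rfl
      exact congrArg Sum.inl (congrArg Prod.fst this)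
    · simp only [matchFun, dif_neg hi]
  | inr j =>
    by_cases hj : ∃ i, (i, j) ∈ C.M
    · have hspec := hj.choose_spec
      have h2 : ∃ j', (hj.choose, j') ∈ C.M := ⟨j, hspec⟩
      simp only [matchFun, dif_pos hj, dif_pos h2]
      have := C.injL _ h2.choose_spec _ hspec rfl
      exact congrArg Sum.inr (congrArg Prod.snd this)
    · simp only [matchFun, dif_neg hj]

/-- The permutation of `Fin k ⊕ Fin l` induced by a partial matching. -/
noncomputable def matchPerm {k l : ℕ} (C : IndexedPartialMatching k l) :
    Equiv.Perm (Fin k ⊕ Fin l) :=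
  (matchFun_involutive C).toPerm

/-! ### From a permutation to a partial matching -/

/-- The partial matching induced by a permutation of `Fin k ⊕ Fin l`:
`i` is matched to `j` whenever `σ` sends `inl i` to `inr j`. -/
def permMatching {k l : ℕ} (σ : Equiv.Perm (Fin k ⊕ Fin l)) :
    IndexedPartialMatching k l where
  M := Finset.univ.filter (fun ij => σ (Sum.inl ij.1) = Sum.inr ij.2)
  injL := by
    intro a ha b hb h
    simp only [Finset.mem_filter, Finset.mem_univ, true_and] at ha hb
    rw [h] at ha
    rw [ha] at hb
    exact Prod.ext h (Sum.inr.inj hb)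
  injR := by
    intro a ha b hb h
    simp only [Finset.mem_filter, Finset.mem_univ, true_and] at ha hb
    rw [h, ← hb] at ha
    exact Prod.ext (Sum.inl.inj (σ.injective ha)) h

/-! ### Boundedness / nonnegativity facts -/

lemma pmCost_nonneg {k l : ℕ} (p : Fin k → ℝ × ℝ) (q : Fin l → ℝ × ℝ)
    (C : IndexedPartialMatching k l) : 0 ≤ pmCost p q C := by
  apply Real.sSup_nonneg
  rintro r ((⟨ij, _, rfl⟩ | ⟨i, _, rfl⟩) | ⟨j, _, rfl⟩)
  · exact linfDist_nonneg _ _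
  · exact distToDiag_nonneg _
  · exact distToDiag_nonneg _

lemma pmCost_bddAbove {k l : ℕ} (p : Fin k → ℝ × ℝ) (q : Fin l → ℝ × ℝ)
    (C : IndexedPartialMatching k l) :
    BddAbove ({r | ∃ ij ∈ C.M, r = linfDist (p ij.1) (q ij.2)} ∪
        {r | ∃ i, (∀ j, (i, j) ∉ C.M) ∧ r = distToDiag (p i)} ∪
        {r | ∃ j, (∀ i, (i, j) ∉ C.M) ∧ r = distToDiag (q j)}) := by
  apply Set.Finite.bddAbove
  apply Set.Finite.subset
    (((Set.finite_range fun ij : Fin k × Fin l => linfDist (p ij.1) (q ij.2)).union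
      (Set.finite_range fun i => distToDiag (p i))).union
      (Set.finite_range fun j => distToDiag (q j)))
  rintro r ((⟨ij, _, rfl⟩ | ⟨i, _, rfl⟩) | ⟨j, _, rfl⟩)
  · exact Or.inl (Or.inl ⟨ij, rfl⟩)
  · exact Or.inl (Or.inr ⟨i, rfl⟩)
  · exact Or.inr ⟨j, rfl⟩

lemma perm_set_bddAbove {ι : Type*} [Fintype ι] (A B : ι → ℝ × ℝ) (σ : Equiv.Perm ι) :
    BddAbove {d | ∃ i, d = linfDist (A i) (B (σ i))} := by
  apply Set.Finite.bddAbove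
  apply Set.Finite.subset (Set.finite_range fun i => linfDist (A i) (B (σ i)))
  rintro d ⟨i, rfl⟩
  exact ⟨i, rfl⟩

lemma perm_sSup_nonneg {ι : Type*} [Fintype ι] (A B : ι → ℝ × ℝ) (σ : Equiv.Perm ι) :
    0 ≤ sSup {d | ∃ i, d = linfDist (A i) (B (σ i))} := by
  apply Real.sSup_nonneg
  rintro d ⟨i, rfl⟩
  exact linfDist_nonneg _ _

/-! ### The two key inequalities -/

lemma perm_cost_le_pmCost {k l : ℕ} (p : Fin k → ℝ × ℝ) (q : Fin l → ℝ × ℝ)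
    (C : IndexedPartialMatching k l) :
    sSup {d | ∃ x, d = linfDist (Sum.elim p (fun j => diagProj (q j)) x)
        (Sum.elim (fun i => diagProj (p i)) q ((matchPerm C) x))} ≤ pmCost p q C := by
  apply Real.sSup_le _ (pmCost_nonneg p q C)
  rintro d ⟨x, rfl⟩
  have hperm : ∀ y, (matchPerm C) y = matchFun C y := fun y => rfl
  cases x with
  | inl i =>
    by_cases hi : ∃ j, (i, j) ∈ C.M
    · rw [hperm]
      simp only [matchFun, dif_pos hi, Sum.elim_inl, Sum.elim_inr]
      exact le_csSup (pmCost_bddAbove p q C)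
        (Or.inl (Or.inl ⟨(i, hi.choose), hi.choose_spec, rfl⟩))
    · rw [hperm]
      simp only [matchFun, dif_neg hi, Sum.elim_inl]
      rw [linfDist_diagProj_self]
      push_neg at hi
      exact le_csSup (pmCost_bddAbove p q C) (Or.inl (Or.inr ⟨i, hi, rfl⟩))
  | inr j =>
    by_cases hj : ∃ i, (i, j) ∈ C.M
    · rw [hperm]
      simp only [matchFun, dif_pos hj, Sum.elim_inl, Sum.elim_inr]
      calc linfDist (diagProj (q j)) (diagProj (p hj.choose))
          ≤ linfDist (q j) (p hj.choose) := linfDist_diagProj_le _ _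
        _ = linfDist (p hj.choose) (q j) := linfDist_comm _ _
        _ ≤ pmCost p q C := le_csSup (pmCost_bddAbove p q C)
            (Or.inl (Or.inl ⟨(hj.choose, j), hj.choose_spec, rfl⟩))
    · rw [hperm]
      simp only [matchFun, dif_neg hj, Sum.elim_inr]
      rw [linfDist_comm, linfDist_diagProj_self]
      push_neg at hj
      exact le_csSup (pmCost_bddAbove p q C) (Or.inr ⟨j, hj, rfl⟩)

lemma pmCost_le_perm_cost {k l : ℕ} (p : Fin k → ℝ × ℝ) (q : Fin l → ℝ × ℝ)
    (σ : Equiv.Perm (Fin k ⊕ Fin l)) :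
    pmCost p q (permMatching σ) ≤
      sSup {d | ∃ x, d = linfDist (Sum.elim p (fun j => diagProj (q j)) x)
        (Sum.elim (fun i => diagProj (p i)) q (σ x))} := by
  set A := Sum.elim p (fun j => diagProj (q j)) with hA
  set B := Sum.elim (fun i => diagProj (p i)) q with hB
  have hbdd := perm_set_bddAbove A B σ
  apply Real.sSup_le _ (perm_sSup_nonneg A B σ)
  rintro r ((⟨ij, hij, rfl⟩ | ⟨i, hi, rfl⟩) | ⟨j, hj, rfl⟩)
  · simp only [permMatching, Finset.mem_filter, Finset.mem_univ, true_and] at hij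
    apply le_csSup hbdd
    refine ⟨Sum.inl ij.1, ?_⟩
    rw [hij]
    simp [hA, hB]
  · -- i unmatched: σ (inl i) must be some inl i'
    have hni : ∀ j, σ (Sum.inl i) ≠ Sum.inr j := by
      intro j hcon
      exact hi j (by simp [permMatching, hcon])
    obtain ⟨i', hi'⟩ : ∃ i', σ (Sum.inl i) = Sum.inl i' := by
      cases h : σ (Sum.inl i) with
      | inl i' => exact ⟨i', rfl⟩
      | inr j => exact absurd h (hni j)
    calc distToDiag (p i) ≤ linfDist (p i) (diagProj (p i')) := distToDiag_le_left _ _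
      _ ≤ _ := le_csSup hbdd ⟨Sum.inl i, by rw [hi']; simp [hA, hB]⟩
  · -- j unmatched on the right: σ⁻¹ (inr j) must be some inr j'
    have hni : ∀ i, σ (Sum.inl i) ≠ Sum.inr j := by
      intro i hcon
      exact hj i (by simp [permMatching, hcon])
    obtain ⟨j', hj'⟩ : ∃ j', σ (Sum.inr j') = Sum.inr j := by
      cases h : σ.symm (Sum.inr j) with
      | inl i => exact absurd (by rw [← h, σ.apply_symm_apply]) (hni i)
      | inr j' => exact ⟨j', by rw [← h, σ.apply_symm_apply]⟩
    calc distToDiag (q j) ≤ linfDist (diagProj (q j')) (q j) := distToDiag_le_right _ _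
      _ ≤ _ := le_csSup hbdd ⟨Sum.inr j', by rw [hj']; simp [hA, hB]⟩

/-! ### Main theorem -/

/-- The bottleneck distance between persistence diagrams `P` and `Q` equals
the perfect-matching bottleneck distance between the augmented point sets
`P ∪ Q'` and `Q ∪ P'`, where `P'`, `Q'` are the diagonal projections of
`P`, `Q` (multiplicities counted via index sets `Fin k ⊕ Fin l`). -/
theorem dB_eq_dHatB_augmented {k l : ℕ}
    (p : Fin k → ℝ × ℝ) (q : Fin l → ℝ × ℝ) :
    dB p q =
      dHatB (Sum.elim p (fun j => diagProj (q j)))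
            (Sum.elim (fun i => diagProj (p i)) q) := by
  unfold dB dHatB
  have hSne : {r | ∃ C : IndexedPartialMatching k l, r = pmCost p q C}.Nonempty :=
    ⟨_, ⟨∅, by simp, by simp⟩, rfl⟩
  have hTne : {r | ∃ σ : Equiv.Perm (Fin k ⊕ Fin l), r =
      sSup {d | ∃ x, d = linfDist (Sum.elim p (fun j => diagProj (q j)) x)
        (Sum.elim (fun i => diagProj (p i)) q (σ x))}}.Nonempty :=
    ⟨_, Equiv.refl _, rfl⟩
  have hSbd : BddBelow {r | ∃ C : IndexedPartialMatching k l, r = pmCost p q C} := by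
    refine ⟨0, ?_⟩
    rintro r ⟨C, rfl⟩
    exact pmCost_nonneg p q C
  have hTbd : BddBelow {r | ∃ σ : Equiv.Perm (Fin k ⊕ Fin l), r =
      sSup {d | ∃ x, d = linfDist (Sum.elim p (fun j => diagProj (q j)) x)
        (Sum.elim (fun i => diagProj (p i)) q (σ x))}} := by
    refine ⟨0, ?_⟩
    rintro r ⟨σ, rfl⟩
    exact perm_sSup_nonneg _ _ σ
  apply le_antisymm
  · apply le_csInf hTne
    rintro t ⟨σ, rfl⟩
    exact le_trans (csInf_le hSbd ⟨permMatching σ, rfl⟩) (pmCost_le_perm_cost p q σ)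
  · apply le_csInf hSne
    rintro s ⟨C, rfl⟩
    exact le_trans (csInf_le hTbd ⟨matchPerm C, rfl⟩) (perm_cost_le_pmCost p q C)
end
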